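/- The trigonometric Kronecker function φ(ℏ, z) := coth(ℏ) + coth(z) (with coth(x) = cosh(x)/sinh(x)) satisfies: (a) the Fay identity φ(ℏ, z₁−z₂)φ(η, z₂−z₃) = φ(η, z₁−z₃)φ(ℏ−η, z₁−z₂) + φ(η−ℏ, z₂−z₃)φ(ℏ, z₁−z₃) for all ℏ, η, z₁, z₂, z₃ ∈ ℂ such that sinh is nonzero at ℏ, η, ℏ−η, z₁−z₂, z₂−z₃ and z₁−z₃; and (b) the unitarity relation φ(ℏ, z)φ(ℏ, −z) = 1/sinh²(ℏ) − 1/sinh²(z) for all ℏ, z ∈ ℂ with sinh(ℏ) ≠ 0 and sinh(z) ≠ 0. -/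

import Mathlib

open Complex

/-- The trigonometric (hyperbolic) Kronecker function `φ(ℏ,z) = coth(ℏ) + coth(z)`. -/
noncomputable def trigKron (ℏ z : ℂ) : ℂ :=
  Complex.cosh ℏ / Complex.sinh ℏ + Complex.cosh z / Complex.sinh z

/-- The trigonometric Kronecker function satisfies the Fay identity and the unitarity
relation with `E(x) = 1/sinh²(x)`. -/
theorem trigonometric_kronecker_fay_and_unitarity :
    (∀ ℏ η z₁ z₂ z₃ : ℂ, Complex.sinh ℏ ≠ 0 → Complex.sinh η ≠ 0 →
      Complex.sinh (ℏ - η) ≠ 0 → Complex.sinh (z₁ - z₂) ≠ 0 →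
      Complex.sinh (z₂ - z₃) ≠ 0 → Complex.sinh (z₁ - z₃) ≠ 0 →
      trigKron ℏ (z₁ - z₂) * trigKron η (z₂ - z₃) =
        trigKron η (z₁ - z₃) * trigKron (ℏ - η) (z₁ - z₂) +
          trigKron (η - ℏ) (z₂ - z₃) * trigKron ℏ (z₁ - z₃)) ∧
    (∀ ℏ z : ℂ, Complex.sinh ℏ ≠ 0 → Complex.sinh z ≠ 0 →
      trigKron ℏ z * trigKron ℏ (-z) =
        1 / Complex.sinh ℏ ^ 2 - 1 / Complex.sinh z ^ 2) := by
  constructor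
  · intro ℏ η z₁ z₂ z₃ h1 h2 h3 h4 h5 h6
    simp only [trigKron, Complex.cosh, Complex.sinh, Complex.exp_neg,
      Complex.exp_sub] at *
    have eA := Complex.exp_ne_zero ℏ
    have eB := Complex.exp_ne_zero η
    have e1 := Complex.exp_ne_zero z₁
    have e2 := Complex.exp_ne_zero z₂
    have e3 := Complex.exp_ne_zero z₃
    set A := Complex.exp ℏ
    set B := Complex.exp η
    set x := Complex.exp z₁
    set y := Complex.exp z₂
    set w := Complex.exp z₃
    rw [div_ne_zero_iff] at h1 h2 h3 h4 h5 h6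
    have hA : A * A - 1 ≠ 0 := fun h =>
      h1.1 (sub_eq_zero.mpr (eq_inv_of_mul_eq_one_left (by linear_combination h)))
    have hB : B * B - 1 ≠ 0 := fun h =>
      h2.1 (sub_eq_zero.mpr (eq_inv_of_mul_eq_one_left (by linear_combination h)))
    have hAB : A * A - B * B ≠ 0 := by
      intro h; apply h3.1
      rw [inv_div, div_sub_div _ _ eB eA, div_eq_zero_iff]
      exact Or.inl (by linear_combination h)
    have hxy : x * x - y * y ≠ 0 := by
      intro h; apply h4.1
      rw [inv_div, div_sub_div _ _ e2 e1, div_eq_zero_iff]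
      exact Or.inl (by linear_combination h)
    have hyw : y * y - w * w ≠ 0 := by
      intro h; apply h5.1
      rw [inv_div, div_sub_div _ _ e3 e2, div_eq_zero_iff]
      exact Or.inl (by linear_combination h)
    have hxw : x * x - w * w ≠ 0 := by
      intro h; apply h6.1
      rw [inv_div, div_sub_div _ _ e3 e1, div_eq_zero_iff]
      exact Or.inl (by linear_combination h)
    have hBA : B * B - A * A ≠ 0 := fun h => hAB (by linear_combination -h)
    simp only [← sq] at hA hB hAB hxy hyw hxw hBA
    field_simp
    ring
  · intro ℏ z h1 h2
    simp only [trigKron, Complex.cosh, Complex.sinh, Complex.exp_neg, neg_neg] at *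
    have e1 := Complex.exp_ne_zero ℏ
    have e2 := Complex.exp_ne_zero z
    set a := Complex.exp ℏ
    set b := Complex.exp z
    rw [div_ne_zero_iff] at h1 h2
    have hA : a * a - 1 ≠ 0 := fun h =>
      h1.1 (sub_eq_zero.mpr (eq_inv_of_mul_eq_one_left (by linear_combination h)))
    have hB : b * b - 1 ≠ 0 := fun h =>
      h2.1 (sub_eq_zero.mpr (eq_inv_of_mul_eq_one_left (by linear_combination h)))
    have hB' : (1 : ℂ) - b * b ≠ 0 := fun h => hB (by linear_combination -h)
    simp only [← sq] at hA hB hB'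
    field_simp
    ring
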